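/- Let $f : \mathbb{R}^d \to \mathbb{R}$ be differentiable with $L$-Lipschitz gradient, $\alpha \geq 2$, and let $\nu_* = e^{-f}$ be a probability density. If $\rho_0$ is the density of $\mathcal{N}(0,\sigma^2 I_d)$ with $\sigma^2 < (L+1)^{-1}$, then $\int (\rho_0(x)/\nu_*(x))^\alpha \nu_*(x)\,dx \leq \frac{\exp((\alpha-1)(f(0) + \|\nabla f(0)\|^2/2))}{(2\pi\sigma^2)^{\alpha d/2}} \Big(\frac{2\pi}{\alpha/\sigma^2 - (\alpha-1)(L+1)}\Big)^{d/2}$. -/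

import Mathlib

open MeasureTheory Real

lemma aux_descent {d : ℕ} (f : EuclideanSpace ℝ (Fin d) → ℝ)
    (g : EuclideanSpace ℝ (Fin d) → EuclideanSpace ℝ (Fin d)) (L : ℝ)
    (hgrad : ∀ x, HasGradientAt f (g x) x)
    (hLip : ∀ x y, ‖g x - g y‖ ≤ L * ‖x - y‖) (x : EuclideanSpace ℝ (Fin d)) :
    f x ≤ f 0 + inner ℝ (g 0) x + L / 2 * ‖x‖ ^ 2 := by
  set φ : ℝ → ℝ := fun t => f (t • x) - t * inner ℝ (g 0) x - L * t ^ 2 / 2 * ‖x‖ ^ 2 with hφ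
  have hφd : ∀ t : ℝ, HasDerivAt φ
      ((inner ℝ (g (t • x)) x : ℝ) - inner ℝ (g 0) x - L * t * ‖x‖ ^ 2) t := by
    intro t
    have h1 : HasDerivAt (fun t : ℝ => t • x) x t := by
      simpa using (hasDerivAt_id t).smul_const x
    have h2 := (hgrad (t • x)).hasFDerivAt.comp_hasDerivAt t h1
    have h3 : HasDerivAt (fun t : ℝ => t * (inner ℝ (g 0) x : ℝ)) (inner ℝ (g 0) x) t := by
      simpa using (hasDerivAt_id t).mul_const (inner ℝ (g 0) x : ℝ)
    have h4 : HasDerivAt (fun t : ℝ => L * t ^ 2 / 2 * ‖x‖ ^ 2) (L * t * ‖x‖ ^ 2) t := by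
      have := ((hasDerivAt_pow 2 t).const_mul L).div_const 2
      have h5 := this.mul_const (‖x‖ ^ 2)
      refine h5.congr_deriv ?_
      rw [show (2:ℕ) - 1 = 1 from rfl]
      push_cast
      ring
    have h6 := (h2.sub h3).sub h4
    have e : ((InnerProductSpace.toDual ℝ (EuclideanSpace ℝ (Fin d))) (g (t • x))) x = inner ℝ (g (t • x)) x := InnerProductSpace.toDual_apply_apply
    rw [e] at h6
    exact h6
  have hanti : AntitoneOn φ (Set.Icc 0 1) := by
    apply antitoneOn_of_deriv_nonpos (convex_Icc 0 1)
    · exact fun t _ => ((hφd t).continuousAt).continuousWithinAt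
    · exact fun t _ => ((hφd t).differentiableAt).differentiableWithinAt
    · intro t ht
      rw [(hφd t).deriv]
      rw [interior_Icc] at ht
      have hip : (inner ℝ (g (t • x)) x : ℝ) - inner ℝ (g 0) x ≤ L * t * ‖x‖ ^ 2 := by
        have h7 : (inner ℝ (g (t • x)) x : ℝ) - inner ℝ (g 0) x = inner ℝ (g (t • x) - g 0) x := by
          rw [inner_sub_left]
        rw [h7]
        calc (inner ℝ (g (t • x) - g 0) x : ℝ) ≤ ‖g (t • x) - g 0‖ * ‖x‖ :=
              real_inner_le_norm _ _
          _ ≤ (L * ‖t • x - 0‖) * ‖x‖ := by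
              apply mul_le_mul_of_nonneg_right (hLip _ _) (norm_nonneg _)
          _ = L * t * ‖x‖ ^ 2 := by
              rw [sub_zero, norm_smul]
              simp [abs_of_pos ht.1]
              ring
      linarith
  have h01 := hanti (Set.left_mem_Icc.2 zero_le_one) (Set.right_mem_Icc.2 zero_le_one) zero_le_one
  simp only [hφ, zero_smul, one_smul, zero_mul, zero_pow, mul_zero, sub_zero, one_mul,
    one_pow, mul_one, zero_div] at h01
  linarith

theorem stmt_9 (d : ℕ) (f : EuclideanSpace ℝ (Fin d) → ℝ)
    (g : EuclideanSpace ℝ (Fin d) → EuclideanSpace ℝ (Fin d))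
    (L α σ2 : ℝ) (hL : 0 < L) (hα : 2 ≤ α) (hσ2 : 0 < σ2) (hσ2L : σ2 < (L + 1)⁻¹)
    (hgrad : ∀ x, HasGradientAt f (g x) x)
    (hLip : ∀ x y, ‖g x - g y‖ ≤ L * ‖x - y‖)
    (hnorm : ∫ x : EuclideanSpace ℝ (Fin d), Real.exp (-f x) = 1)
    (ρ₀ : EuclideanSpace ℝ (Fin d) → ℝ)
    (hρ₀ : ∀ x, ρ₀ x = (2 * π * σ2) ^ (-(d : ℝ) / 2) * Real.exp (-‖x‖ ^ 2 / (2 * σ2))) :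
    ∫ x : EuclideanSpace ℝ (Fin d), (ρ₀ x / Real.exp (-f x)) ^ α * Real.exp (-f x) ≤
      Real.exp ((α - 1) * (f 0 + ‖g 0‖ ^ 2 / 2)) / (2 * π * σ2) ^ (α * d / 2) *
        (2 * π / (α / σ2 - (α - 1) * (L + 1))) ^ ((d : ℝ) / 2) := by
  have hπσ : (0:ℝ) < 2 * π * σ2 := by positivity
  set c : ℝ := α / σ2 - (α - 1) * (L + 1) with hc_def
  have hinv : L + 1 < σ2⁻¹ := by
    have h := inv_strictAnti₀ hσ2 hσ2L
    rwa [inv_inv] at h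
  have hαpos : (0:ℝ) < α := by linarith
  have hc : 0 < c := by
    rw [hc_def, div_eq_mul_inv]
    nlinarith [mul_lt_mul_of_pos_left hinv hαpos]
  set C : ℝ := (2 * π * σ2) ^ (-(d : ℝ) / 2 * α) * Real.exp ((α - 1) * (f 0 + ‖g 0‖ ^ 2 / 2))
    with hC_def
  have hCpos : 0 < C := by
    rw [hC_def]; positivity
  -- pointwise bound
  have key : ∀ x : EuclideanSpace ℝ (Fin d),
      (ρ₀ x / Real.exp (-f x)) ^ α * Real.exp (-f x) ≤ C * Real.exp (-(c/2) * ‖x‖ ^ 2) := by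
    intro x
    have hfx := aux_descent f g L hgrad hLip x
    have hip : (inner ℝ (g 0) x : ℝ) ≤ ‖g 0‖ ^ 2 / 2 + ‖x‖ ^ 2 / 2 := by
      have h1 := real_inner_le_norm (g 0) x
      nlinarith [sq_nonneg (‖g 0‖ - ‖x‖)]
    have hfx2 : f x ≤ f 0 + ‖g 0‖ ^ 2 / 2 + (L + 1) / 2 * ‖x‖ ^ 2 := by nlinarith
    have hLHS : (ρ₀ x / Real.exp (-f x)) ^ α * Real.exp (-f x)
        = (2 * π * σ2) ^ (-(d : ℝ) / 2 * α)
          * Real.exp (-‖x‖ ^ 2 / (2 * σ2) * α + (α - 1) * f x) := by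
      rw [hρ₀ x, div_rpow (by positivity) (Real.exp_pos _).le,
        mul_rpow (by positivity) (Real.exp_pos _).le, ← Real.rpow_mul hπσ.le,
        ← Real.exp_mul, ← Real.exp_mul, div_mul_eq_mul_div,
        div_eq_iff (Real.exp_ne_zero _), mul_assoc, mul_assoc, ← Real.exp_add,
        mul_assoc, ← Real.exp_add]
      congr 1
      ring
    rw [hLHS]
    have hCe : C * Real.exp (-(c/2) * ‖x‖ ^ 2) = (2 * π * σ2) ^ (-(d : ℝ) / 2 * α)
        * Real.exp ((α - 1) * (f 0 + ‖g 0‖ ^ 2 / 2) + -(c/2) * ‖x‖ ^ 2) := by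
      rw [Real.exp_add, hC_def]; ring
    rw [hCe]
    apply mul_le_mul_of_nonneg_left _ (by positivity)
    apply Real.exp_le_exp.2
    have hmul : (α - 1) * f x ≤ (α - 1) * (f 0 + ‖g 0‖ ^ 2 / 2 + (L + 1) / 2 * ‖x‖ ^ 2) :=
      mul_le_mul_of_nonneg_left hfx2 (by linarith)
    have hring : -‖x‖ ^ 2 / (2 * σ2) * α + (α - 1) * ((L + 1) / 2 * ‖x‖ ^ 2)
        = -(c/2) * ‖x‖ ^ 2 := by
      rw [hc_def]
      field_simp
      ring
    nlinarith [hmul, hring]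
  -- integrability of the dominating function
  have hint0 : Integrable (fun x : EuclideanSpace ℝ (Fin d) => Real.exp (-(c/2) * ‖x‖ ^ 2)) := by
    have h := GaussianFourier.integrable_cexp_neg_mul_sq_norm_add
      (b := ((c/2 : ℝ) : ℂ)) (by simpa using half_pos hc) 0 (0 : EuclideanSpace ℝ (Fin d))
    refine h.norm.congr (Filter.Eventually.of_forall fun v => ?_)
    simp [Complex.norm_exp, ← Complex.ofReal_pow]
  have hint : Integrable
      (fun x : EuclideanSpace ℝ (Fin d) => C * Real.exp (-(c/2) * ‖x‖ ^ 2)) :=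
    hint0.const_mul C
  have hmono := integral_mono_of_nonneg
    (Filter.Eventually.of_forall (fun x => by
      have : 0 ≤ ρ₀ x := by rw [hρ₀]; positivity
      positivity))
    hint (Filter.Eventually.of_forall key)
  refine hmono.trans ?_
  rw [integral_const_mul, GaussianFourier.integral_rexp_neg_mul_sq_norm (half_pos hc)]
  have hfr : (Module.finrank ℝ (EuclideanSpace ℝ (Fin d)) : ℝ) = d := by
    simp [finrank_euclideanSpace_fin]
  rw [hfr]
  have h2π : π / (c/2) = 2 * π / c := by
    rw [div_div_eq_mul_div]; ring
  rw [h2π]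
  apply le_of_eq
  congr 1
  rw [hC_def, eq_div_iff (by positivity : (2 * π * σ2) ^ (α * (d : ℝ) / 2) ≠ 0),
    mul_right_comm, ← Real.rpow_add hπσ]
  have hz : -(d : ℝ) / 2 * α + α * (d : ℝ) / 2 = 0 := by ring
  rw [hz, Real.rpow_zero, one_mul]
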